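/- For any μ₀, μ₁, μ₂ ∈ 𝒫₂(ℝᵈ) and any constant speed geodesic (μ_s)_{s∈[0,1]} from μ₀ to μ₁ in the Wasserstein space: W₂²(μ_s, μ₂) ≥ (1−s)W₂²(μ₀,μ₂) + sW₂²(μ₁,μ₂) − s(1−s)W₂²(μ₀,μ₁) for all s ∈ [0,1]. (The Wasserstein space over ℝᵈ is positively curved.) -/

import Mathlib

open MeasureTheory
open scoped ENNReal

variable {d : ℕ}

/-- Squared 2-Wasserstein distance, as an infimum over couplings. -/
noncomputable def W2sq (μ ν : Measure (EuclideanSpace ℝ (Fin d))) : ℝ≥0∞ :=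
  ⨅ π ∈ {π : Measure (EuclideanSpace ℝ (Fin d) × EuclideanSpace ℝ (Fin d)) |
      π.map Prod.fst = μ ∧ π.map Prod.snd = ν},
    ∫⁻ p, edist p.1 p.2 ^ 2 ∂π

/-- 2-Wasserstein distance. -/
noncomputable def W2 (μ ν : Measure (EuclideanSpace ℝ (Fin d))) : ℝ≥0∞ :=
  (W2sq μ ν) ^ (1/2 : ℝ)

section Aux

open ProbabilityTheory

/-- The set of couplings of two measures. -/
def Cpl (μ ν : Measure (EuclideanSpace ℝ (Fin d))) :
    Set (Measure (EuclideanSpace ℝ (Fin d) × EuclideanSpace ℝ (Fin d))) :=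
  {π | π.map Prod.fst = μ ∧ π.map Prod.snd = ν}

lemma W2sq_le {μ ν : Measure (EuclideanSpace ℝ (Fin d))}
    {π : Measure (EuclideanSpace ℝ (Fin d) × EuclideanSpace ℝ (Fin d))}
    (h : π ∈ Cpl μ ν) : W2sq μ ν ≤ ∫⁻ p, edist p.1 p.2 ^ 2 ∂π :=
  biInf_le _ h

lemma lintegral_fst_of_coupling {μ : Measure (EuclideanSpace ℝ (Fin d))}
    {π : Measure (EuclideanSpace ℝ (Fin d) × EuclideanSpace ℝ (Fin d))}
    (h : π.map Prod.fst = μ) {f : EuclideanSpace ℝ (Fin d) → ℝ≥0∞} (hf : Measurable f) :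
    ∫⁻ p, f p.1 ∂π = ∫⁻ x, f x ∂μ := by
  rw [← h, lintegral_map hf measurable_fst]

lemma lintegral_snd_of_coupling {μ : Measure (EuclideanSpace ℝ (Fin d))}
    {π : Measure (EuclideanSpace ℝ (Fin d) × EuclideanSpace ℝ (Fin d))}
    (h : π.map Prod.snd = μ) {f : EuclideanSpace ℝ (Fin d) → ℝ≥0∞} (hf : Measurable f) :
    ∫⁻ p, f p.2 ∂π = ∫⁻ x, f x ∂μ := by
  rw [← h, lintegral_map hf measurable_snd]

lemma enn_add_sq_le (x y : ℝ≥0∞) : (x + y) ^ 2 ≤ 4 * (x ^ 2 + y ^ 2) := by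
  rcases le_total x y with h | h
  · calc (x + y)^2 ≤ (y + y)^2 := by gcongr
    _ = 4 * y^2 := by ring
    _ ≤ 4 * (x^2 + y^2) := by gcongr; exact le_add_self
  · calc (x + y)^2 ≤ (x + x)^2 := by gcongr
    _ = 4 * x^2 := by ring
    _ ≤ 4 * (x^2 + y^2) := by gcongr; exact le_self_add

lemma prod_mem_Cpl (μ ν : Measure (EuclideanSpace ℝ (Fin d)))
    [IsProbabilityMeasure μ] [IsProbabilityMeasure ν] : μ.prod ν ∈ Cpl μ ν :=
  ⟨Measure.fst_prod, Measure.snd_prod⟩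

lemma W2sq_lt_top {μ ν : Measure (EuclideanSpace ℝ (Fin d))}
    [IsProbabilityMeasure μ] [IsProbabilityMeasure ν]
    (hμ : ∫⁻ x, edist x 0 ^ 2 ∂μ < ⊤) (hν : ∫⁻ x, edist x 0 ^ 2 ∂ν < ⊤) :
    W2sq μ ν < ⊤ := by
  refine lt_of_le_of_lt (W2sq_le (prod_mem_Cpl μ ν)) ?_
  have hb : ∀ p : EuclideanSpace ℝ (Fin d) × EuclideanSpace ℝ (Fin d),
      edist p.1 p.2 ^ 2 ≤ 4 * (edist p.1 0 ^ 2 + edist p.2 0 ^ 2) := by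
    intro p
    refine le_trans ?_ (enn_add_sq_le _ _)
    gcongr
    exact (edist_triangle _ _ _).trans (by rw [edist_comm (0 : EuclideanSpace ℝ (Fin d)) p.2])
  refine lt_of_le_of_lt (lintegral_mono hb) ?_
  rw [lintegral_const_mul _ (by fun_prop), lintegral_add_left (by fun_prop)]
  rw [lintegral_fst_of_coupling (f := fun x => edist x 0 ^ 2) (prod_mem_Cpl μ ν).1 (by fun_prop),
      lintegral_snd_of_coupling (f := fun x => edist x 0 ^ 2) (prod_mem_Cpl μ ν).2 (by fun_prop)]
  exact ENNReal.mul_lt_top (by norm_num) (ENNReal.add_lt_top.2 ⟨hμ, hν⟩)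

lemma exists_eps_coupling (μ ν : Measure (EuclideanSpace ℝ (Fin d)))
    [IsProbabilityMeasure μ] [IsProbabilityMeasure ν] {ε : ℝ≥0∞} (hε : 0 < ε) :
    ∃ π ∈ Cpl μ ν, ∫⁻ p, edist p.1 p.2 ^ 2 ∂π ≤ W2sq μ ν + ε := by
  by_cases htop : W2sq μ ν + ε = ⊤
  · exact ⟨μ.prod ν, prod_mem_Cpl μ ν, htop ▸ le_top⟩
  · have h1 : W2sq μ ν < W2sq μ ν + ε :=
      ENNReal.lt_add_right (fun h => htop (by simp [h])) hε.ne'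
    rw [W2sq] at h1
    obtain ⟨π, hπ⟩ := iInf_lt_iff.mp h1
    by_cases hmem : π ∈ Cpl μ ν
    · refine ⟨π, hmem, ?_⟩
      have hmem' : π ∈ {π : Measure (EuclideanSpace ℝ (Fin d) × EuclideanSpace ℝ (Fin d)) |
          π.map Prod.fst = μ ∧ π.map Prod.snd = ν} := hmem
      simp only [hmem', iInf_pos] at hπ
      exact hπ.le
    · simp only [show π ∉ {π : Measure (EuclideanSpace ℝ (Fin d) × EuclideanSpace ℝ (Fin d)) |
          π.map Prod.fst = μ ∧ π.map Prod.snd = ν} from hmem, not_false_iff, iInf_neg] at hπ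
      exact absurd hπ (by simp)

lemma isProb_of_coupling {μ : Measure (EuclideanSpace ℝ (Fin d))} [IsProbabilityMeasure μ]
    {π : Measure (EuclideanSpace ℝ (Fin d) × EuclideanSpace ℝ (Fin d))}
    (h : π.map Prod.fst = μ) : IsProbabilityMeasure π := by
  constructor
  have h' : π (Prod.fst ⁻¹' Set.univ) = μ Set.univ := by
    rw [← Measure.map_apply measurable_fst MeasurableSet.univ, h]
  simpa [measure_univ] using h'

section marginals
variable {X Y Z : Type*} [MeasurableSpace X] [MeasurableSpace Y] [MeasurableSpace Z]

lemma map_compProd_prod_left (μ : Measure X) [SFinite μ] (κ : Kernel X Y) (η : Kernel X Z)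
    [IsSFiniteKernel κ] [IsMarkovKernel η] :
    (μ ⊗ₘ (κ ×ₖ η)).map (fun p => (p.1, p.2.1)) = μ ⊗ₘ κ := by
  ext s hs
  have hmeas : Measurable fun p : X × (Y × Z) => (p.1, p.2.1) :=
    measurable_fst.prodMk (measurable_snd.fst)
  rw [Measure.map_apply hmeas hs, Measure.compProd_apply (hmeas hs), Measure.compProd_apply hs]
  refine lintegral_congr fun a => ?_
  have hset : (Prod.mk a ⁻¹' ((fun p : X × (Y × Z) => (p.1, p.2.1)) ⁻¹' s))
      = Prod.fst ⁻¹' (Prod.mk a ⁻¹' s) := rfl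
  rw [hset, Kernel.prod_apply, ← Measure.fst_apply (measurable_prodMk_left hs),
    Measure.fst_prod]

lemma map_compProd_prod_right (μ : Measure X) [SFinite μ] (κ : Kernel X Y) (η : Kernel X Z)
    [IsMarkovKernel κ] [IsSFiniteKernel η] :
    (μ ⊗ₘ (κ ×ₖ η)).map (fun p => (p.1, p.2.2)) = μ ⊗ₘ η := by
  ext s hs
  have hmeas : Measurable fun p : X × (Y × Z) => (p.1, p.2.2) :=
    measurable_fst.prodMk (measurable_snd.snd)
  rw [Measure.map_apply hmeas hs, Measure.compProd_apply (hmeas hs), Measure.compProd_apply hs]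
  refine lintegral_congr fun a => ?_
  have hset : (Prod.mk a ⁻¹' ((fun p : X × (Y × Z) => (p.1, p.2.2)) ⁻¹' s))
      = Prod.snd ⁻¹' (Prod.mk a ⁻¹' s) := rfl
  rw [hset, Kernel.prod_apply, ← Measure.snd_apply (measurable_prodMk_left hs),
    Measure.snd_prod]

end marginals

section glue
variable {X : Type*} [MeasurableSpace X] [StandardBorelSpace X] [Nonempty X]

lemma glue3 {μs : Measure X} [IsProbabilityMeasure μs]
    (α η β : Measure (X × X)) [IsProbabilityMeasure α] [IsProbabilityMeasure η]
    [IsProbabilityMeasure β]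
    (hα : α.map Prod.fst = μs) (hη : η.map Prod.fst = μs) (hβ : β.map Prod.fst = μs) :
    ∃ σ : Measure (X × (X × X × X)), IsProbabilityMeasure σ ∧
      σ.map (fun p => (p.1, p.2.1)) = α ∧
      σ.map (fun p => (p.1, p.2.2.1)) = η ∧
      σ.map (fun p => (p.1, p.2.2.2)) = β := by
  have hαf : α.fst = μs := hα
  have hηf : η.fst = μs := hη
  have hβf : β.fst = μs := hβ
  refine ⟨μs ⊗ₘ (α.condKernel ×ₖ (η.condKernel ×ₖ β.condKernel)), ?_, ?_, ?_, ?_⟩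
  · constructor
    rw [Measure.compProd_apply_univ]
    exact measure_univ
  · rw [map_compProd_prod_left, ← hαf, α.disintegrate α.condKernel]
  · have h2 : (fun p : X × (X × X × X) => (p.1, p.2.2.1))
        = (fun q : X × (X × X) => (q.1, q.2.1)) ∘ (fun p : X × (X × X × X) => (p.1, p.2.2)) := rfl
    rw [h2, ← Measure.map_map (measurable_fst.prodMk measurable_snd.fst)
      (measurable_fst.prodMk measurable_snd.snd), map_compProd_prod_right,
      map_compProd_prod_left, ← hηf, η.disintegrate η.condKernel]
  · have h2 : (fun p : X × (X × X × X) => (p.1, p.2.2.2))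
        = (fun q : X × (X × X) => (q.1, q.2.2)) ∘ (fun p : X × (X × X × X) => (p.1, p.2.2)) := rfl
    rw [h2, ← Measure.map_map (measurable_fst.prodMk measurable_snd.snd)
      (measurable_fst.prodMk measurable_snd.snd), map_compProd_prod_right,
      map_compProd_prod_right, ← hβf, β.disintegrate β.condKernel]

end glue

lemma real_convex_identity {E : Type*} [NormedAddCommGroup E] [InnerProductSpace ℝ E]
    (a b c : E) (s : ℝ) :
    (1 - s) * ‖a - c‖ ^ 2 + s * ‖b - c‖ ^ 2
      = ‖(1 - s) • a + s • b - c‖ ^ 2 + s * (1 - s) * ‖a - b‖ ^ 2 := by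
  have h1 : (1 - s) • a + s • b - c = (1 - s) • (a - c) + s • (b - c) := by
    module
  have h2 : a - b = (a - c) - (b - c) := by abel
  rw [h1, h2]
  set u := a - c
  set v := b - c
  have e1 : ‖(1 - s) • u + s • v‖ ^ 2
      = (1-s)^2 * ‖u‖^2 + 2 * ((1-s) * s * inner ℝ u v) + s^2 * ‖v‖^2 := by
    rw [norm_add_sq_real, norm_smul, norm_smul, real_inner_smul_left, real_inner_smul_right]
    simp only [Real.norm_eq_abs, mul_pow, sq_abs]
    ring
  have e2 : ‖u - v‖ ^ 2 = ‖u‖^2 - 2 * inner ℝ u v + ‖v‖^2 := norm_sub_sq_real u v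
  rw [e1, e2]; ring

lemma enn_convex_identity {E : Type*} [NormedAddCommGroup E] [InnerProductSpace ℝ E]
    (a b c : E) {s : ℝ} (hs0 : 0 ≤ s) (hs1 : s ≤ 1) :
    ENNReal.ofReal (1 - s) * edist a c ^ 2 + ENNReal.ofReal s * edist b c ^ 2
      = edist ((1 - s) • a + s • b) c ^ 2
        + ENNReal.ofReal (s * (1 - s)) * edist a b ^ 2 := by
  have hs1' : 0 ≤ 1 - s := by linarith
  simp only [edist_dist, dist_eq_norm]
  rw [← ENNReal.ofReal_pow (norm_nonneg _), ← ENNReal.ofReal_pow (norm_nonneg _),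
      ← ENNReal.ofReal_pow (norm_nonneg _), ← ENNReal.ofReal_pow (norm_nonneg _),
      ← ENNReal.ofReal_mul hs1', ← ENNReal.ofReal_mul hs0,
      ← ENNReal.ofReal_mul (by nlinarith), ← ENNReal.ofReal_add (by positivity) (by positivity),
      ← ENNReal.ofReal_add (by positivity) (by positivity)]
  exact congrArg _ (real_convex_identity a b c s)

lemma lintegral_sq_triangle {Ω : Type*} [MeasurableSpace Ω] {σ : Measure Ω}
    {f g h : Ω → ℝ≥0∞} (hf : Measurable f) (hg : Measurable g)
    (hfg : ∀ ω, h ω ≤ f ω + g ω) :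
    ∫⁻ ω, h ω ^ 2 ∂σ ≤ ((∫⁻ ω, f ω ^ 2 ∂σ) ^ (1/2 : ℝ) + (∫⁻ ω, g ω ^ 2 ∂σ) ^ (1/2 : ℝ)) ^ 2 := by
  have key : (∫⁻ ω, h ω ^ 2 ∂σ) ^ (1/2 : ℝ)
      ≤ (∫⁻ ω, f ω ^ 2 ∂σ) ^ (1/2 : ℝ) + (∫⁻ ω, g ω ^ 2 ∂σ) ^ (1/2 : ℝ) := by
    have tri := ENNReal.lintegral_Lp_add_le (μ := σ) hf.aemeasurable hg.aemeasurable
      (p := (2:ℝ)) one_le_two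
    have hmono : ∫⁻ ω, h ω ^ (2:ℝ) ∂σ ≤ ∫⁻ ω, (f + g) ω ^ (2:ℝ) ∂σ := by
      refine lintegral_mono fun ω => ?_
      exact ENNReal.rpow_le_rpow (hfg ω) (by norm_num)
    have := le_trans (ENNReal.rpow_le_rpow hmono (by norm_num : (0:ℝ) ≤ 1/2)) tri
    have hconv : ∀ x : ℝ≥0∞, x ^ (2:ℝ) = x ^ (2:ℕ) := fun x => by
      rw [← ENNReal.rpow_natCast x 2]; norm_num
    simp only [hconv, Pi.add_apply] at this ⊢
    exact this
  calc ∫⁻ ω, h ω ^ 2 ∂σ = ((∫⁻ ω, h ω ^ 2 ∂σ) ^ (1/2:ℝ)) ^ 2 := by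
        rw [← ENNReal.rpow_natCast _ 2, ← ENNReal.rpow_mul]; norm_num
  _ ≤ _ := by gcongr

lemma rpow_half_sq (x : ℝ≥0∞) : (x ^ (1/2:ℝ)) ^ 2 = x := by
  rw [← ENNReal.rpow_natCast _ 2, ← ENNReal.rpow_mul]; norm_num

lemma lintegral_transfer {Ω Y : Type*} [MeasurableSpace Ω] [MeasurableSpace Y]
    {σ : Measure Ω} {T : Ω → Y} (hT : Measurable T) {ρ : Measure Y} (h : σ.map T = ρ)
    {F : Y → ℝ≥0∞} (hF : Measurable F) :
    ∫⁻ p, F (T p) ∂σ = ∫⁻ q, F q ∂ρ := by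
  rw [← h, lintegral_map hF hT]

lemma sq_W2 (μ ν : Measure (EuclideanSpace ℝ (Fin d))) : (W2 μ ν) ^ 2 = W2sq μ ν := by
  rw [W2, ← ENNReal.rpow_natCast _ 2, ← ENNReal.rpow_mul]; norm_num

end Aux

theorem wasserstein_space_positively_curved
    (μ₀ μ₁ μ₂ : Measure (EuclideanSpace ℝ (Fin d)))
    [IsProbabilityMeasure μ₀] [IsProbabilityMeasure μ₁] [IsProbabilityMeasure μ₂]
    (hm₀ : ∫⁻ x, edist x 0 ^ 2 ∂μ₀ < ⊤) (hm₁ : ∫⁻ x, edist x 0 ^ 2 ∂μ₁ < ⊤)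
    (hm₂ : ∫⁻ x, edist x 0 ^ 2 ∂μ₂ < ⊤)
    (μgeo : ℝ → Measure (EuclideanSpace ℝ (Fin d)))
    (hprob : ∀ s ∈ Set.Icc (0:ℝ) 1, IsProbabilityMeasure (μgeo s))
    (h0 : μgeo 0 = μ₀) (h1 : μgeo 1 = μ₁)
    (hgeo : ∀ s t : ℝ, s ∈ Set.Icc (0:ℝ) 1 → t ∈ Set.Icc (0:ℝ) 1 →
        W2 (μgeo s) (μgeo t) = ENNReal.ofReal |s - t| * W2 μ₀ μ₁) :
    ∀ s : ℝ, s ∈ Set.Icc (0:ℝ) 1 →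
      ENNReal.ofReal (1 - s) * W2sq μ₀ μ₂ + ENNReal.ofReal s * W2sq μ₁ μ₂ ≤
        W2sq (μgeo s) μ₂ + ENNReal.ofReal (s * (1 - s)) * W2sq μ₀ μ₁ := by
  intro s hs
  haveI hPs : IsProbabilityMeasure (μgeo s) := hprob s hs
  obtain ⟨hs0, hs1⟩ := hs
  rcases eq_or_lt_of_le hs0 with hseq | hs0'
  · simp [← hseq, h0]
  rcases eq_or_lt_of_le hs1 with hseq | hs1'
  · simp [hseq, h1]
  have hIcc : s ∈ Set.Icc (0:ℝ) 1 := ⟨hs0, hs1⟩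
  set Cq := W2sq μ₀ μ₁ with hCqdef
  have hCqlt : Cq < ⊤ := W2sq_lt_top hm₀ hm₁
  have hgeosq : ∀ t u : ℝ, t ∈ Set.Icc (0:ℝ) 1 → u ∈ Set.Icc (0:ℝ) 1 →
      W2sq (μgeo t) (μgeo u) = ENNReal.ofReal ((t-u)^2) * Cq := by
    intro t u ht hu
    rw [← sq_W2, hgeo t u ht hu, mul_pow, sq_W2, ← ENNReal.ofReal_pow (abs_nonneg _), sq_abs]
  have hW0 : W2sq (μgeo s) μ₀ = ENNReal.ofReal (s^2) * Cq := by
    have h := hgeosq s 0 hIcc (by norm_num)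
    rw [h0] at h
    simpa using h
  have hW1 : W2sq (μgeo s) μ₁ = ENNReal.ofReal ((1-s)^2) * Cq := by
    have h := hgeosq s 1 hIcc (by norm_num)
    rw [h1] at h
    rw [h]
    congr 2
    ring
  -- second moment of μgeo s is finite
  have hms : ∫⁻ x, edist x 0 ^ 2 ∂(μgeo s) < ⊤ := by
    obtain ⟨π, hπc, hπcost⟩ := exists_eps_coupling (μgeo s) μ₀ (ε := 1) one_pos
    rw [← lintegral_fst_of_coupling (f := fun x => edist x 0 ^ 2) hπc.1 (by fun_prop)]
    have hb : ∀ p : EuclideanSpace ℝ (Fin d) × EuclideanSpace ℝ (Fin d),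
        edist p.1 0 ^ 2 ≤ 4 * (edist p.1 p.2 ^ 2 + edist p.2 0 ^ 2) := by
      intro p
      refine le_trans ?_ (enn_add_sq_le _ _)
      gcongr
      exact edist_triangle _ _ _
    refine lt_of_le_of_lt (lintegral_mono hb) ?_
    rw [lintegral_const_mul _ (by fun_prop), lintegral_add_left (by fun_prop)]
    refine ENNReal.mul_lt_top (by norm_num) (ENNReal.add_lt_top.2 ⟨?_, ?_⟩)
    · refine lt_of_le_of_lt hπcost ?_
      rw [hW0]
      exact ENNReal.add_lt_top.2 ⟨ENNReal.mul_lt_top ENNReal.ofReal_lt_top hCqlt, ENNReal.one_lt_top⟩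
    · rw [lintegral_snd_of_coupling (f := fun x => edist x 0 ^ 2) hπc.2 (by fun_prop)]
      exact hm₀
  set M := W2sq (μgeo s) μ₂ with hMdef
  have hMlt : M < ⊤ := W2sq_lt_top hms hm₂
  have hk_ne : ENNReal.ofReal (s * (1 - s)) * Cq ≠ ⊤ :=
    (ENNReal.mul_lt_top ENNReal.ofReal_lt_top hCqlt).ne
  -- the key epsilon-approximation inequality
  have key : ∀ ε : ℝ≥0∞, 0 < ε →
      ENNReal.ofReal (1 - s) * W2sq μ₀ μ₂ + ENNReal.ofReal s * W2sq μ₁ μ₂ ≤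
        (ε ^ (1/2:ℝ) + (M + ε) ^ (1/2:ℝ)) ^ 2
          + ENNReal.ofReal (s * (1 - s)) *
            ((ENNReal.ofReal (s^2) * Cq + ε) ^ (1/2:ℝ)
              + (ENNReal.ofReal ((1-s)^2) * Cq + ε) ^ (1/2:ℝ)) ^ 2 := by
    intro ε hε
    obtain ⟨α, hαc, hαcost⟩ := exists_eps_coupling (μgeo s) μ₀ hε
    obtain ⟨η, hηc, hηcost⟩ := exists_eps_coupling (μgeo s) μ₁ hε
    obtain ⟨β, hβc, hβcost⟩ := exists_eps_coupling (μgeo s) μ₂ hε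
    rw [hW0] at hαcost
    rw [hW1] at hηcost
    haveI := isProb_of_coupling hαc.1
    haveI := isProb_of_coupling hηc.1
    haveI := isProb_of_coupling hβc.1
    obtain ⟨σ, hσp, hσ0, hσ1, hσ2⟩ := glue3 α η β hαc.1 hηc.1 hβc.1
    -- measurability helpers
    have mx0 : Measurable fun p : EuclideanSpace ℝ (Fin d) ×
        (EuclideanSpace ℝ (Fin d) × EuclideanSpace ℝ (Fin d) × EuclideanSpace ℝ (Fin d)) =>
        p.2.1 := measurable_snd.fst
    have mx1 : Measurable fun p : EuclideanSpace ℝ (Fin d) ×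
        (EuclideanSpace ℝ (Fin d) × EuclideanSpace ℝ (Fin d) × EuclideanSpace ℝ (Fin d)) =>
        p.2.2.1 := measurable_snd.snd.fst
    have mx2 : Measurable fun p : EuclideanSpace ℝ (Fin d) ×
        (EuclideanSpace ℝ (Fin d) × EuclideanSpace ℝ (Fin d) × EuclideanSpace ℝ (Fin d)) =>
        p.2.2.2 := measurable_snd.snd.snd
    have mxt : Measurable fun p : EuclideanSpace ℝ (Fin d) ×
        (EuclideanSpace ℝ (Fin d) × EuclideanSpace ℝ (Fin d) × EuclideanSpace ℝ (Fin d)) =>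
        (1-s) • p.2.1 + s • p.2.2.1 := (mx0.const_smul (1-s)).add (mx1.const_smul s)
    have mE : ∀ {Ω : Type} [inst : MeasurableSpace Ω]
        {f g : Ω → EuclideanSpace ℝ (Fin d)}, Measurable f → Measurable g →
        Measurable fun p => edist (f p) (g p) ^ 2 := by
      intro Ω inst f g hf hg
      exact (hf.edist hg).pow_const 2
    have mEE : Measurable fun q : EuclideanSpace ℝ (Fin d) × EuclideanSpace ℝ (Fin d) =>
        edist q.1 q.2 ^ 2 := mE measurable_fst measurable_snd
    -- transfers of the three cost bounds
    have ha : ∫⁻ p, edist p.2.1 p.1 ^ 2 ∂σ ≤ ENNReal.ofReal (s^2) * Cq + ε := by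
      have h' : ∫⁻ p, edist p.2.1 p.1 ^ 2 ∂σ = ∫⁻ q, edist q.1 q.2 ^ 2 ∂α := by
        have h2 : ∫⁻ p, edist p.1 p.2.1 ^ 2 ∂σ = ∫⁻ q, edist q.1 q.2 ^ 2 ∂α :=
          lintegral_transfer (measurable_fst.prodMk mx0) hσ0 mEE
        rw [← h2]
        exact lintegral_congr fun p => by rw [edist_comm]
      rw [h']; exact hαcost
    have hb : ∫⁻ p, edist p.2.2.1 p.1 ^ 2 ∂σ ≤ ENNReal.ofReal ((1-s)^2) * Cq + ε := by
      have h' : ∫⁻ p, edist p.2.2.1 p.1 ^ 2 ∂σ = ∫⁻ q, edist q.1 q.2 ^ 2 ∂η := by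
        have h2 : ∫⁻ p, edist p.1 p.2.2.1 ^ 2 ∂σ = ∫⁻ q, edist q.1 q.2 ^ 2 ∂η :=
          lintegral_transfer (measurable_fst.prodMk mx1) hσ1 mEE
        rw [← h2]
        exact lintegral_congr fun p => by rw [edist_comm]
      rw [h']; exact hηcost
    have hm' : ∫⁻ p, edist p.1 p.2.2.2 ^ 2 ∂σ ≤ M + ε := by
      have h2 : ∫⁻ p, edist p.1 p.2.2.2 ^ 2 ∂σ = ∫⁻ q, edist q.1 q.2 ^ 2 ∂β :=
        lintegral_transfer (measurable_fst.prodMk mx2) hσ2 mEE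
      rw [h2]; exact hβcost
    -- one-coordinate marginals
    have hx0 : σ.map (fun p => p.2.1) = μ₀ := by
      rw [show (fun p : EuclideanSpace ℝ (Fin d) ×
          (EuclideanSpace ℝ (Fin d) × EuclideanSpace ℝ (Fin d) × EuclideanSpace ℝ (Fin d)) =>
          p.2.1) = Prod.snd ∘ (fun p => (p.1, p.2.1)) from rfl,
        ← Measure.map_map measurable_snd (measurable_fst.prodMk mx0), hσ0, hαc.2]
    have hx1 : σ.map (fun p => p.2.2.1) = μ₁ := by
      rw [show (fun p : EuclideanSpace ℝ (Fin d) ×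
          (EuclideanSpace ℝ (Fin d) × EuclideanSpace ℝ (Fin d) × EuclideanSpace ℝ (Fin d)) =>
          p.2.2.1) = Prod.snd ∘ (fun p => (p.1, p.2.2.1)) from rfl,
        ← Measure.map_map measurable_snd (measurable_fst.prodMk mx1), hσ1, hηc.2]
    have hx2 : σ.map (fun p => p.2.2.2) = μ₂ := by
      rw [show (fun p : EuclideanSpace ℝ (Fin d) ×
          (EuclideanSpace ℝ (Fin d) × EuclideanSpace ℝ (Fin d) × EuclideanSpace ℝ (Fin d)) =>
          p.2.2.2) = Prod.snd ∘ (fun p => (p.1, p.2.2.2)) from rfl,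
        ← Measure.map_map measurable_snd (measurable_fst.prodMk mx2), hσ2, hβc.2]
    -- pair couplings and lower bounds
    have cpl01 : σ.map (fun p => (p.2.1, p.2.2.1)) ∈ Cpl μ₀ μ₁ := by
      constructor
      · rw [Measure.map_map measurable_fst (mx0.prodMk mx1)]; exact hx0
      · rw [Measure.map_map measurable_snd (mx0.prodMk mx1)]; exact hx1
    have cpl02 : σ.map (fun p => (p.2.1, p.2.2.2)) ∈ Cpl μ₀ μ₂ := by
      constructor
      · rw [Measure.map_map measurable_fst (mx0.prodMk mx2)]; exact hx0
      · rw [Measure.map_map measurable_snd (mx0.prodMk mx2)]; exact hx2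
    have cpl12 : σ.map (fun p => (p.2.2.1, p.2.2.2)) ∈ Cpl μ₁ μ₂ := by
      constructor
      · rw [Measure.map_map measurable_fst (mx1.prodMk mx2)]; exact hx1
      · rw [Measure.map_map measurable_snd (mx1.prodMk mx2)]; exact hx2
    have hcge : Cq ≤ ∫⁻ p, edist p.2.1 p.2.2.1 ^ 2 ∂σ :=
      (W2sq_le cpl01).trans_eq (lintegral_transfer (mx0.prodMk mx1) rfl mEE).symm
    have hAle : W2sq μ₀ μ₂ ≤ ∫⁻ p, edist p.2.1 p.2.2.2 ^ 2 ∂σ :=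
      (W2sq_le cpl02).trans_eq (lintegral_transfer (mx0.prodMk mx2) rfl mEE).symm
    have hBle : W2sq μ₁ μ₂ ≤ ∫⁻ p, edist p.2.2.1 p.2.2.2 ^ 2 ∂σ :=
      (W2sq_le cpl12).trans_eq (lintegral_transfer (mx1.prodMk mx2) rfl mEE).symm
    -- integrated convexity identities
    have id1 : ENNReal.ofReal (1-s) * ∫⁻ p, edist p.2.1 p.1 ^ 2 ∂σ
        + ENNReal.ofReal s * ∫⁻ p, edist p.2.2.1 p.1 ^ 2 ∂σ
        = (∫⁻ p, edist ((1-s) • p.2.1 + s • p.2.2.1) p.1 ^ 2 ∂σ)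
          + ENNReal.ofReal (s*(1-s)) * ∫⁻ p, edist p.2.1 p.2.2.1 ^ 2 ∂σ := by
      rw [← lintegral_const_mul _ (mE mx0 measurable_fst),
          ← lintegral_const_mul _ (mE mx1 measurable_fst),
          ← lintegral_add_left ((mE mx0 measurable_fst).const_mul _),
          ← lintegral_const_mul _ (mE mx0 mx1),
          ← lintegral_add_left (mE mxt measurable_fst)]
      exact lintegral_congr fun p => enn_convex_identity _ _ _ hs0 hs1
    have id2 : ENNReal.ofReal (1-s) * ∫⁻ p, edist p.2.1 p.2.2.2 ^ 2 ∂σ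
        + ENNReal.ofReal s * ∫⁻ p, edist p.2.2.1 p.2.2.2 ^ 2 ∂σ
        = (∫⁻ p, edist ((1-s) • p.2.1 + s • p.2.2.1) p.2.2.2 ^ 2 ∂σ)
          + ENNReal.ofReal (s*(1-s)) * ∫⁻ p, edist p.2.1 p.2.2.1 ^ 2 ∂σ := by
      rw [← lintegral_const_mul _ (mE mx0 mx2),
          ← lintegral_const_mul _ (mE mx1 mx2),
          ← lintegral_add_left ((mE mx0 mx2).const_mul _),
          ← lintegral_const_mul _ (mE mx0 mx1),
          ← lintegral_add_left (mE mxt mx2)]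
      exact lintegral_congr fun p => enn_convex_identity _ _ _ hs0 hs1
    -- the interpolation point is close to the geodesic point
    have he : (∫⁻ p, edist ((1-s) • p.2.1 + s • p.2.2.1) p.1 ^ 2 ∂σ) ≤ ε := by
      have h1 : (∫⁻ p, edist ((1-s) • p.2.1 + s • p.2.2.1) p.1 ^ 2 ∂σ)
          + ENNReal.ofReal (s*(1-s)) * Cq
          ≤ ε + ENNReal.ofReal (s*(1-s)) * Cq := by
        calc (∫⁻ p, edist ((1-s) • p.2.1 + s • p.2.2.1) p.1 ^ 2 ∂σ)
            + ENNReal.ofReal (s*(1-s)) * Cq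
            ≤ (∫⁻ p, edist ((1-s) • p.2.1 + s • p.2.2.1) p.1 ^ 2 ∂σ)
              + ENNReal.ofReal (s*(1-s)) * ∫⁻ p, edist p.2.1 p.2.2.1 ^ 2 ∂σ := by gcongr
          _ = ENNReal.ofReal (1-s) * ∫⁻ p, edist p.2.1 p.1 ^ 2 ∂σ
              + ENNReal.ofReal s * ∫⁻ p, edist p.2.2.1 p.1 ^ 2 ∂σ := id1.symm
          _ ≤ ENNReal.ofReal (1-s) * (ENNReal.ofReal (s^2) * Cq + ε)
              + ENNReal.ofReal s * (ENNReal.ofReal ((1-s)^2) * Cq + ε) := by gcongr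
          _ = ε + ENNReal.ofReal (s*(1-s)) * Cq := by
              rw [mul_add, mul_add, ← mul_assoc, ← mul_assoc,
                ← ENNReal.ofReal_mul (by linarith), ← ENNReal.ofReal_mul hs0]
              have hsum : ENNReal.ofReal ((1-s) * s^2) * Cq
                  + ENNReal.ofReal (s * (1-s)^2) * Cq
                  = ENNReal.ofReal (s*(1-s)) * Cq := by
                rw [← add_mul, ← ENNReal.ofReal_add (by nlinarith) (by nlinarith)]
                congr 2
                ring
              have heps : ENNReal.ofReal (1-s) * ε + ENNReal.ofReal s * ε = ε := by
                rw [← add_mul, ← ENNReal.ofReal_add (by linarith) hs0]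
                norm_num
              calc ENNReal.ofReal ((1-s) * s^2) * Cq + ENNReal.ofReal (1-s) * ε
                  + (ENNReal.ofReal (s * (1-s)^2) * Cq + ENNReal.ofReal s * ε)
                  = (ENNReal.ofReal ((1-s) * s^2) * Cq + ENNReal.ofReal (s * (1-s)^2) * Cq)
                    + (ENNReal.ofReal (1-s) * ε + ENNReal.ofReal s * ε) := by ring
                _ = ε + ENNReal.ofReal (s*(1-s)) * Cq := by rw [hsum, heps, add_comm]
      exact (ENNReal.add_le_add_iff_right hk_ne).mp h1
    -- triangle bounds
    have he2 : (∫⁻ p, edist ((1-s) • p.2.1 + s • p.2.2.1) p.2.2.2 ^ 2 ∂σ)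
        ≤ (ε ^ (1/2:ℝ) + (M + ε) ^ (1/2:ℝ)) ^ 2 := by
      have tri := lintegral_sq_triangle (σ := σ)
        (f := fun p => edist ((1-s) • p.2.1 + s • p.2.2.1) p.1)
        (g := fun p => edist p.1 p.2.2.2)
        (h := fun p => edist ((1-s) • p.2.1 + s • p.2.2.1) p.2.2.2)
        (mxt.edist measurable_fst) (measurable_fst.edist mx2)
        (fun p => edist_triangle _ _ _)
      refine tri.trans ?_
      exact pow_le_pow_left' (add_le_add (ENNReal.rpow_le_rpow he (by norm_num))
        (ENNReal.rpow_le_rpow hm' (by norm_num))) 2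
    have hcle : (∫⁻ p, edist p.2.1 p.2.2.1 ^ 2 ∂σ)
        ≤ ((ENNReal.ofReal (s^2) * Cq + ε) ^ (1/2:ℝ)
            + (ENNReal.ofReal ((1-s)^2) * Cq + ε) ^ (1/2:ℝ)) ^ 2 := by
      have tri := lintegral_sq_triangle (σ := σ)
        (f := fun p => edist p.2.1 p.1)
        (g := fun p => edist p.1 p.2.2.1)
        (h := fun p => edist p.2.1 p.2.2.1)
        (mx0.edist measurable_fst) (measurable_fst.edist mx1)
        (fun p => edist_triangle _ _ _)
      refine tri.trans ?_
      have hb' : ∫⁻ p, edist p.1 p.2.2.1 ^ 2 ∂σ ≤ ENNReal.ofReal ((1-s)^2) * Cq + ε := by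
        have h2 : ∫⁻ p, edist p.1 p.2.2.1 ^ 2 ∂σ = ∫⁻ q, edist q.1 q.2 ^ 2 ∂η :=
          lintegral_transfer (measurable_fst.prodMk mx1) hσ1 mEE
        rw [h2]; exact hηcost
      exact pow_le_pow_left' (add_le_add (ENNReal.rpow_le_rpow ha (by norm_num))
        (ENNReal.rpow_le_rpow hb' (by norm_num))) 2
    -- assemble
    calc ENNReal.ofReal (1 - s) * W2sq μ₀ μ₂ + ENNReal.ofReal s * W2sq μ₁ μ₂
        ≤ ENNReal.ofReal (1-s) * ∫⁻ p, edist p.2.1 p.2.2.2 ^ 2 ∂σ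
          + ENNReal.ofReal s * ∫⁻ p, edist p.2.2.1 p.2.2.2 ^ 2 ∂σ :=
        add_le_add (mul_le_mul_right hAle _) (mul_le_mul_right hBle _)
      _ = (∫⁻ p, edist ((1-s) • p.2.1 + s • p.2.2.1) p.2.2.2 ^ 2 ∂σ)
          + ENNReal.ofReal (s*(1-s)) * ∫⁻ p, edist p.2.1 p.2.2.1 ^ 2 ∂σ := id2
      _ ≤ _ := add_le_add he2 (mul_le_mul_right hcle _)
  -- pass to the limit ε → 0
  set F : ℝ≥0∞ → ℝ≥0∞ := fun ε =>
    (ε ^ (1/2:ℝ) + (M + ε) ^ (1/2:ℝ)) ^ 2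
      + ENNReal.ofReal (s * (1 - s)) *
        ((ENNReal.ofReal (s^2) * Cq + ε) ^ (1/2:ℝ)
          + (ENNReal.ofReal ((1-s)^2) * Cq + ε) ^ (1/2:ℝ)) ^ 2 with hFdef
  have hcont : Continuous F := by
    have h12 : Continuous fun x : ℝ≥0∞ => x ^ (1/2:ℝ) := ENNReal.continuous_rpow_const
    refine Continuous.add ?_ ?_
    · exact (ENNReal.continuous_pow 2).comp
        (h12.add (h12.comp (continuous_const.add continuous_id)))
    · exact (ENNReal.continuous_const_mul ENNReal.ofReal_ne_top).comp
        ((ENNReal.continuous_pow 2).comp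
          ((h12.comp (continuous_const.add continuous_id)).add
            (h12.comp (continuous_const.add continuous_id))))
  haveI hne : Filter.NeBot (nhdsWithin (0:ℝ≥0∞) (Set.Ioi 0)) :=
    nhdsWithin_Ioi_neBot' ⟨1, Set.mem_Ioi.mpr zero_lt_one⟩ le_rfl
  have htend : Filter.Tendsto F (nhdsWithin 0 (Set.Ioi 0)) (nhds (F 0)) :=
    (hcont.tendsto 0).mono_left nhdsWithin_le_nhds
  have hle : ENNReal.ofReal (1 - s) * W2sq μ₀ μ₂ + ENNReal.ofReal s * W2sq μ₁ μ₂ ≤ F 0 :=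
    ge_of_tendsto htend (eventually_nhdsWithin_of_forall fun ε hε => key ε hε)
  have hF0 : F 0 = M + ENNReal.ofReal (s * (1 - s)) * Cq := by
    have hz : (0:ℝ≥0∞) ^ (1/2:ℝ) = 0 := ENNReal.zero_rpow_of_pos (by norm_num)
    have hhalf : ∀ t : ℝ, 0 < t →
        (ENNReal.ofReal (t^2) * Cq) ^ (1/2:ℝ) = ENNReal.ofReal t * Cq ^ (1/2:ℝ) := by
      intro t ht
      rw [ENNReal.mul_rpow_of_nonneg _ _ (by norm_num),
        ENNReal.ofReal_rpow_of_pos (by positivity)]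
      congr 2
      rw [show (t^2 : ℝ) = t ^ (2:ℕ) from rfl, ← Real.rpow_natCast t 2,
        ← Real.rpow_mul ht.le]
      norm_num
    rw [hFdef]
    simp only [add_zero, hz, zero_add]
    rw [rpow_half_sq, hhalf s hs0', hhalf (1-s) (by linarith), ← add_mul,
      ← ENNReal.ofReal_add hs0 (by linarith), show s + (1-s) = 1 by ring,
      ENNReal.ofReal_one, one_mul, rpow_half_sq]
  rwa [hF0] at hle
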